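/- Let ρ be a σ-finite Borel measure on [0,1] × (0,∞) satisfying the scaling relation ρ(B × e^{s}C) = e^{s} ρ(B × C) for every s ∈ ℝ, Borel B ⊆ [0,1], and Borel C ⊆ (0,∞), and which is finite on [0,1] × [a,b] for all 0 < a < b. Then there exists a finite Borel measure μ on [0,1] such that ρ = μ ⊗ Leb, where Leb is Lebesgue measure on (0,∞). -/

import Mathlib

open MeasureTheory Set

lemma image_const_mul_Ioc'' {k a b : ℝ} (hk : 0 < k) :
    (fun r => k * r) '' Ioc a b = Ioc (k * a) (k * b) := by
  ext x
  simp only [mem_image, mem_Ioc]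
  constructor
  · rintro ⟨y, ⟨h1, h2⟩, rfl⟩
    exact ⟨by nlinarith, by nlinarith⟩
  · rintro ⟨h1, h2⟩
    refine ⟨x / k, ⟨?_, ?_⟩, by field_simp⟩
    · rwa [lt_div_iff₀ hk, mul_comm]
    · rwa [div_le_iff₀ hk, mul_comm]

theorem stmt_14 (ρ : Measure (ℝ × ℝ)) [SigmaFinite ρ]
    (hsupp : ρ ((Icc (0:ℝ) 1 ×ˢ Ioi (0:ℝ))ᶜ) = 0)
    (hscale : ∀ (s : ℝ) (B C : Set ℝ), MeasurableSet B → MeasurableSet C →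
      B ⊆ Icc (0:ℝ) 1 → C ⊆ Ioi (0:ℝ) →
      ρ (B ×ˢ ((fun r => Real.exp s * r) '' C)) = ENNReal.ofReal (Real.exp s) * ρ (B ×ˢ C))
    (hfin : ∀ a b : ℝ, 0 < a → a < b → ρ (Icc (0:ℝ) 1 ×ˢ Icc a b) < ⊤) :
    ∃ μ : Measure ℝ, IsFiniteMeasure μ ∧ μ ((Icc (0:ℝ) 1)ᶜ) = 0 ∧
      ρ = μ.prod (volume.restrict (Ioi (0:ℝ))) := by
  set e : ℝ := Real.exp 1 with he
  have he1 : 1 < e := by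
    have := Real.exp_one_gt_d9
    rw [he]; linarith
  -- null-set reduction
  have hnull : ∀ s : Set (ℝ × ℝ), ρ s = ρ (s ∩ (Icc (0:ℝ) 1 ×ˢ Ioi (0:ℝ))) := by
    intro s
    have hT : MeasurableSet (Icc (0:ℝ) 1 ×ˢ Ioi (0:ℝ)) :=
      measurableSet_Icc.prod measurableSet_Ioi
    have h1 := measure_inter_add_diff s hT (μ := ρ)
    have h2 : ρ (s \ (Icc (0:ℝ) 1 ×ˢ Ioi (0:ℝ))) = 0 :=
      measure_mono_null (diff_subset_compl _ _) hsupp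
    rw [← h1, h2, add_zero]
  -- finiteness
  have fin : ∀ B : Set ℝ, B ⊆ Icc 0 1 → ∀ a b : ℝ, 0 < a → ρ (B ×ˢ Ioc a b) < ⊤ := by
    intro B hBs a b ha
    rcases le_or_gt b a with h | h
    · rw [Ioc_eq_empty h.not_gt, prod_empty]; simp
    · exact lt_of_le_of_lt
        (measure_mono (prod_mono hBs Ioc_subset_Icc_self)) (hfin a b ha h)
  -- scaling
  have key : ∀ B : Set ℝ, MeasurableSet B → B ⊆ Icc 0 1 → ∀ k v : ℝ, 0 < k →
      ρ (B ×ˢ Ioc k (k * v)) = ENNReal.ofReal k * ρ (B ×ˢ Ioc 1 v) := by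
    intro B hB hBs k v hk
    have hsub : Ioc (1:ℝ) v ⊆ Ioi 0 := fun x hx => lt_trans zero_lt_one hx.1
    have := hscale (Real.log k) B (Ioc 1 v) hB measurableSet_Ioc hBs hsub
    rwa [Real.exp_log hk, image_const_mul_Ioc'' hk, mul_one] at this
  -- main: value on Ioc 1 u
  have main : ∀ B : Set ℝ, MeasurableSet B → B ⊆ Icc 0 1 → ∀ u : ℝ, 1 < u →
      ρ (B ×ˢ Ioc 1 u)
        = ENNReal.ofReal ((ρ (B ×ˢ Ioc 1 e)).toReal / (e - 1) * (u - 1)) := by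
    intro B hB hBs u hu
    set G : ℝ → ℝ := fun u => (ρ (B ×ˢ Ioc 1 u)).toReal with hGdef
    have gadd : ∀ u v : ℝ, 1 < u → 1 < v → G (u * v) = G u + u * G v := by
      intro u v hu hv
      have hsplit : Ioc (1:ℝ) (u * v) = Ioc 1 u ∪ Ioc u (u * v) :=
        (Ioc_union_Ioc_eq_Ioc hu.le (le_mul_of_one_le_right (by linarith) hv.le)).symm
      have hdisj : Disjoint (B ×ˢ Ioc (1:ℝ) u) (B ×ˢ Ioc u (u * v)) := by
        rw [Set.disjoint_left]
        rintro ⟨x, y⟩ ⟨_, hy⟩ ⟨_, hy'⟩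
        exact absurd hy.2 (not_le.2 hy'.1)
      have hadd : ρ (B ×ˢ Ioc 1 (u * v))
          = ρ (B ×ˢ Ioc 1 u) + ENNReal.ofReal u * ρ (B ×ˢ Ioc 1 v) := by
        rw [hsplit, prod_union, measure_union hdisj (hB.prod measurableSet_Ioc),
          key B hB hBs u v (by linarith)]
      have h1 := fin B hBs 1 u one_pos
      have h2 := fin B hBs 1 v one_pos
      simp only [hGdef]
      rw [hadd, ENNReal.toReal_add h1.ne
          (ENNReal.mul_ne_top ENNReal.ofReal_ne_top h2.ne),
        ENNReal.toReal_mul, ENNReal.toReal_ofReal (by linarith)]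
    have sym : G u + u * G e = G e + e * G u := by
      rw [← gadd u e hu he1, ← gadd e u he1 hu, mul_comm]
    have hGu : G u = G e / (e - 1) * (u - 1) := by
      have hne : e - 1 ≠ 0 := by linarith
      field_simp
      nlinarith [sym]
    calc ρ (B ×ˢ Ioc 1 u) = ENNReal.ofReal (G u) :=
          (ENNReal.ofReal_toReal (fin B hBs 1 u one_pos).ne).symm
    _ = _ := by rw [hGu]
  -- value on Ioc a b, 0 < a < b
  have claim2 : ∀ B : Set ℝ, MeasurableSet B → B ⊆ Icc 0 1 → ∀ a b : ℝ, 0 < a → a < b →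
      ρ (B ×ˢ Ioc a b)
        = ENNReal.ofReal ((ρ (B ×ˢ Ioc 1 e)).toReal / (e - 1) * (b - a)) := by
    intro B hB hBs a b ha hab
    have hba : 1 < b / a := (one_lt_div ha).2 hab
    have hk := key B hB hBs a (b / a) ha
    rw [mul_div_cancel₀ _ ha.ne'] at hk
    rw [hk, main B hB hBs _ hba, ← ENNReal.ofReal_mul ha.le]
    congr 1
    have hne : e - 1 ≠ 0 := by linarith
    field_simp
  -- value on Ioc 0 b
  have claim3 : ∀ B : Set ℝ, MeasurableSet B → B ⊆ Icc 0 1 → ∀ b : ℝ, 0 < b →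
      ρ (B ×ˢ Ioc 0 b)
        = ENNReal.ofReal ((ρ (B ×ˢ Ioc 1 e)).toReal / (e - 1) * b) := by
    intro B hB hBs b hb
    set c : ℝ := (ρ (B ×ˢ Ioc 1 e)).toReal / (e - 1) with hc
    have hcnn : 0 ≤ c := div_nonneg ENNReal.toReal_nonneg (by linarith)
    have hU : Ioc (0:ℝ) b = ⋃ n : ℕ, Ioc (b / (n + 2)) b := by
      ext x
      simp only [mem_iUnion, mem_Ioc]
      constructor
      · rintro ⟨hx, hxb⟩
        obtain ⟨n, hn⟩ := exists_nat_gt (b / x)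
        refine ⟨n, ?_, hxb⟩
        rw [div_lt_iff₀ (by positivity)]
        rw [div_lt_iff₀ hx] at hn
        nlinarith
      · rintro ⟨n, h1, h2⟩
        exact ⟨lt_trans (by positivity) h1, h2⟩
    have hmono : Monotone (fun n : ℕ => B ×ˢ Ioc (b / (n + 2 : ℝ)) b) := by
      intro m n hmn
      apply prod_mono_right
      apply Ioc_subset_Ioc_left
      apply div_le_div_of_nonneg_left hb.le (by positivity)
      have : (m : ℝ) ≤ n := Nat.cast_le.2 hmn
      linarith
    have hval : ∀ n : ℕ, ρ (B ×ˢ Ioc (b / (n + 2 : ℝ)) b)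
        = ENNReal.ofReal (c * (b - b / (n + 2))) := by
      intro n
      have h2 : (1:ℝ) < (n:ℝ) + 2 := by
        have := n.cast_nonneg (α := ℝ); linarith
      exact claim2 B hB hBs _ b (by positivity) (div_lt_self hb (by linarith))
    rw [hU, prod_iUnion, hmono.directed_le.measure_iUnion]
    simp_rw [hval]
    have hmono2 : Monotone fun n : ℕ => ENNReal.ofReal (c * (b - b / (n + 2))) := by
      intro m n hmn
      apply ENNReal.ofReal_le_ofReal
      have h1 : (m : ℝ) ≤ n := Nat.cast_le.2 hmn
      have h2 : b / ((n:ℝ) + 2) ≤ b / ((m:ℝ) + 2) :=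
        div_le_div_of_nonneg_left hb.le (by positivity) (by linarith)
      nlinarith
    have hlim1 : Filter.Tendsto (fun n : ℕ => ENNReal.ofReal (c * (b - b / (n + 2))))
        Filter.atTop (nhds (⨆ n : ℕ, ENNReal.ofReal (c * (b - b / (n + 2))))) :=
      tendsto_atTop_iSup hmono2
    have hreal : Filter.Tendsto (fun n : ℕ => c * (b - b / (n + 2)))
        Filter.atTop (nhds (c * b)) := by
      have h0 : Filter.Tendsto (fun n : ℕ => (n : ℝ) + 2) Filter.atTop Filter.atTop :=
        Filter.tendsto_atTop_add_const_right _ _ tendsto_natCast_atTop_atTop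
      have h1 : Filter.Tendsto (fun n : ℕ => b / ((n : ℝ) + 2)) Filter.atTop (nhds 0) :=
        Filter.Tendsto.div_atTop tendsto_const_nhds h0
      have h2 := (tendsto_const_nhds (x := b)).sub h1
      have h3 := (tendsto_const_nhds (x := c)).mul h2
      simpa using h3
    have hlim2 : Filter.Tendsto (fun n : ℕ => ENNReal.ofReal (c * (b - b / (n + 2))))
        Filter.atTop (nhds (ENNReal.ofReal (c * b))) :=
      (ENNReal.continuous_ofReal.tendsto _).comp hreal
    exact tendsto_nhds_unique hlim1 hlim2
  -- the measure μ
  set μ : Measure ℝ :=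
    (ENNReal.ofReal (e - 1))⁻¹ • ((ρ.restrict (univ ×ˢ Ioc 1 e)).map Prod.fst) with hμ
  have hμval : ∀ B : Set ℝ, MeasurableSet B →
      μ B = (ENNReal.ofReal (e - 1))⁻¹ * ρ (B ×ˢ Ioc 1 e) := by
    intro B hB
    rw [hμ, Measure.smul_apply, Measure.map_apply measurable_fst hB,
      Measure.restrict_apply (measurable_fst hB), smul_eq_mul]
    congr 2
    ext ⟨x, y⟩
    simp [Set.mem_prod, and_comm]
  have hIocsub : Ioc (1:ℝ) e ⊆ Ioi 0 := fun x hx => lt_trans zero_lt_one hx.1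
  -- μ vanishes outside [0,1]
  have hcompl : μ ((Icc (0:ℝ) 1)ᶜ) = 0 := by
    rw [hμval _ measurableSet_Icc.compl]
    have : ρ ((Icc (0:ℝ) 1)ᶜ ×ˢ Ioc 1 e) = 0 := by
      apply measure_mono_null _ hsupp
      rintro ⟨x, y⟩ ⟨hx, _⟩
      simp only [mem_compl_iff, mem_prod, not_and]
      intro h
      exact absurd h hx
    rw [this, mul_zero]
  -- μ of a set equals μ of its intersection with [0,1]
  have hμred : ∀ s : Set ℝ, MeasurableSet s →
      ρ (s ×ˢ Ioc 1 e) = ρ ((s ∩ Icc 0 1) ×ˢ Ioc 1 e) := by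
    intro s hs
    rw [hnull (s ×ˢ Ioc 1 e), prod_inter_prod,
      inter_eq_self_of_subset_left hIocsub]
  -- μ is finite
  have hfinμ : IsFiniteMeasure μ := by
    constructor
    rw [hμval _ MeasurableSet.univ, hμred _ MeasurableSet.univ, univ_inter]
    exact ENNReal.mul_lt_top
      (ENNReal.inv_lt_top.2 (ENNReal.ofReal_pos.2 (by linarith)))
      (fin _ le_rfl 1 e one_pos)
  -- rectangles
  have rect : ∀ s t : Set ℝ, MeasurableSet s → MeasurableSet t →
      ρ (s ×ˢ t) = μ s * (volume.restrict (Ioi (0:ℝ))) t := by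
    intro s t hs ht
    set B : Set ℝ := s ∩ Icc 0 1 with hBdef
    set C : Set ℝ := t ∩ Ioi 0 with hCdef
    have hB : MeasurableSet B := hs.inter measurableSet_Icc
    have hC : MeasurableSet C := ht.inter measurableSet_Ioi
    have hBs : B ⊆ Icc 0 1 := inter_subset_right
    have hCs : C ⊆ Ioi 0 := inter_subset_right
    set c : ℝ := (ρ (B ×ˢ Ioc 1 e)).toReal / (e - 1) with hc
    have hcnn : 0 ≤ c := div_nonneg ENNReal.toReal_nonneg (by linarith)
    have h1 : ρ (s ×ˢ t) = ρ (B ×ˢ C) := by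
      rw [hnull (s ×ˢ t), prod_inter_prod]
    -- compare measures on the second coordinate
    set ν₁ : Measure ℝ := (ρ.restrict (B ×ˢ Ioi 0)).map Prod.snd with hν₁
    have hν₁val : ∀ D : Set ℝ, MeasurableSet D → ν₁ D = ρ (B ×ˢ (D ∩ Ioi 0)) := by
      intro D hD
      rw [hν₁, Measure.map_apply measurable_snd hD,
        Measure.restrict_apply (measurable_snd hD)]
      congr 1
      ext ⟨x, y⟩
      simp only [mem_inter_iff, mem_preimage, mem_prod, mem_inter_iff]
      tauto
    set ν₂ : Measure ℝ := ENNReal.ofReal c • volume.restrict (Ioi (0:ℝ)) with hν₂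
    have hIoc : ∀ a b : ℝ, a < b → ν₁ (Ioc a b) = ν₂ (Ioc a b) := by
      intro a b hab
      have hν₂v : ν₂ (Ioc a b) = ENNReal.ofReal c * ENNReal.ofReal (b - max a 0) := by
        rw [hν₂, Measure.smul_apply, Measure.restrict_apply measurableSet_Ioc,
          Ioc_inter_Ioi, Real.volume_Ioc, smul_eq_mul]
      rw [hν₁val _ measurableSet_Ioc, Ioc_inter_Ioi, hν₂v]
      rcases lt_or_ge 0 a with ha | ha
      · rw [max_eq_left ha.le, claim2 B hB hBs a b ha hab,
          ENNReal.ofReal_mul hcnn]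
      · rw [max_eq_right ha]
        rcases le_or_gt b 0 with hb | hb
        · rw [Ioc_eq_empty (not_lt.2 hb), prod_empty, measure_empty]
          have : ENNReal.ofReal (b - 0) = 0 :=
            ENNReal.ofReal_eq_zero.2 (by linarith)
          rw [this, mul_zero]
        · rw [claim3 B hB hBs b hb, ENNReal.ofReal_mul hcnn, sub_zero]
    have hν : ν₁ = ν₂ := by
      apply Measure.ext_of_Ioc' ν₁ ν₂
      · intro a b hab
        rw [hIoc a b hab, hν₂, Measure.smul_apply, smul_eq_mul,
          Measure.restrict_apply measurableSet_Ioc]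
        apply ENNReal.mul_ne_top ENNReal.ofReal_ne_top
        exact (lt_of_le_of_lt (measure_mono inter_subset_left)
          (by rw [Real.volume_Ioc]; exact ENNReal.ofReal_lt_top)).ne
      · intro a b hab; exact hIoc a b hab
    -- compute ρ (B ×ˢ C)
    have h2 : ρ (B ×ˢ C) = ENNReal.ofReal c * volume C := by
      have hCC : C ∩ Ioi 0 = C := inter_eq_self_of_subset_left hCs
      calc ρ (B ×ˢ C) = ρ (B ×ˢ (C ∩ Ioi 0)) := by rw [hCC]
      _ = ν₁ C := (hν₁val C hC).symm
      _ = ν₂ C := by rw [hν]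
      _ = ENNReal.ofReal c * volume C := by
          rw [hν₂, Measure.smul_apply, smul_eq_mul,
            Measure.restrict_apply hC, hCC]
    -- compute μ s
    have h3 : μ s = ENNReal.ofReal c := by
      have hne : e - 1 ≠ 0 := by linarith
      have hρB : ρ (B ×ˢ Ioc 1 e) = ENNReal.ofReal (c * (e - 1)) := by
        rw [hc, div_mul_cancel₀ _ hne,
          ENNReal.ofReal_toReal (fin B hBs 1 e one_pos).ne]
      have h0 : ENNReal.ofReal (e - 1) ≠ 0 :=
        (ENNReal.ofReal_pos.2 (by linarith)).ne'
      rw [hμval s hs, hμred s hs, ← hBdef, hρB, ENNReal.ofReal_mul hcnn,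
        mul_comm (ENNReal.ofReal c), ← mul_assoc,
        ENNReal.inv_mul_cancel h0 ENNReal.ofReal_ne_top, one_mul]
    rw [h1, h2, h3, Measure.restrict_apply ht]
  haveI := hfinμ
  exact ⟨μ, hfinμ, hcompl, (Measure.prod_eq rect).symm⟩
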